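/- Let H be a real Hadamard matrix of order N ≥ 4, and let H' be obtained from H by switching the signs of two columns (multiplying two columns by -1). If all row sums of H are divisible by 4, then all row sums of H' are divisible by 4, and the parity of the number of rows with row sum ≡ 4 (mod 8) is the same for H and H'. -/

import Mathlib

/-- Switching the signs of two columns of a real Hadamard matrix of order `N ≥ 4`
whose row sums are all divisible by `4` preserves divisibility by `4` of all row
sums, and preserves the parity of the number of rows with row sum `4` modulo `8`. -/
theorem hadamard_double_column_switch
    (N : ℕ) (hN : 4 ≤ N) (H : Matrix (Fin N) (Fin N) ℤ)
    (hentries : ∀ i j, H i j = 1 ∨ H i j = -1)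
    (horth : ∀ i j, i ≠ j → ∑ k, H i k * H j k = 0)
    (hrows : ∀ i, (4 : ℤ) ∣ ∑ j, H i j)
    (c₁ c₂ : Fin N) (hc : c₁ ≠ c₂)
    (H' : Matrix (Fin N) (Fin N) ℤ)
    (hH' : ∀ i k, H' i k = if k = c₁ ∨ k = c₂ then -H i k else H i k) :
    (∀ i, (4 : ℤ) ∣ ∑ j, H' i j) ∧
    (Finset.univ.filter (fun i => (∑ j, H i j) % 8 = 4)).card % 2 =
      (Finset.univ.filter (fun i => (∑ j, H' i j) % 8 = 4)).card % 2 := by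
  classical
  -- row dot products
  have hrowdot : ∀ i j, ∑ k, H i k * H j k = if i = j then (N:ℤ) else 0 := by
    intro i j
    by_cases h : i = j
    · subst h
      rw [if_pos rfl]
      have h1 : ∀ k : Fin N, H i k * H i k = 1 := by
        intro k; rcases hentries i k with h1 | h1 <;> rw [h1] <;> ring
      rw [Finset.sum_congr rfl fun k _ => h1 k]
      simp
    · rw [if_neg h]; exact horth i j h
  -- column dot products
  have hcol : ∀ j k : Fin N, ∑ i, H i j * H i k = if j = k then (N:ℤ) else 0 := by
    set A : Matrix (Fin N) (Fin N) ℚ := fun i j => (H i j : ℚ) with hAdef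
    have hA : A * A.transpose = (N:ℚ) • 1 := by
      ext i j
      have h0 := hrowdot i j
      simp only [Matrix.mul_apply, Matrix.transpose_apply, Matrix.smul_apply,
        Matrix.one_apply, smul_eq_mul]
      simp only [hAdef]
      have : ∑ k, ((H i k : ℚ) * (H j k : ℚ)) = ((∑ k, H i k * H j k : ℤ) : ℚ) := by
        push_cast; ring_nf
      rw [this, h0]
      split <;> simp
    have hNne : (N:ℚ) ≠ 0 := by
      have : 0 < N := by omega
      exact_mod_cast this.ne'
    have h1 : A * ((N:ℚ)⁻¹ • A.transpose) = 1 := by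
      rw [Matrix.mul_smul, hA, smul_smul, inv_mul_cancel₀ hNne, one_smul]
    have h2 : ((N:ℚ)⁻¹ • A.transpose) * A = 1 := mul_eq_one_comm.mp h1
    have h3 : A.transpose * A = (N:ℚ) • 1 := by
      have := congrArg (fun M => (N:ℚ) • M) h2
      simpa [Matrix.smul_mul, smul_smul, mul_inv_cancel₀ hNne] using this
    intro j k
    have h4 := congrFun (congrFun h3 j) k
    simp only [Matrix.mul_apply, Matrix.transpose_apply, Matrix.smul_apply,
      Matrix.one_apply, smul_eq_mul] at h4
    simp only [hAdef] at h4
    have h5 : ∑ i, ((H i j : ℚ) * (H i k : ℚ)) = ((∑ i, H i j * H i k : ℤ) : ℚ) := by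
      push_cast; ring_nf
    rw [h5] at h4
    by_cases h : j = k
    · rw [if_pos h] at h4 ⊢; rw [mul_one] at h4; exact_mod_cast h4
    · rw [if_neg h] at h4 ⊢; rw [mul_zero] at h4; exact_mod_cast h4
  -- 4 divides N
  have h4N : (4:ℤ) ∣ (N:ℤ) := by
    have key : ∑ i, H i c₁ * (∑ j, H i j) = (N:ℤ) := by
      have : ∑ i, H i c₁ * (∑ j, H i j) = ∑ j, ∑ i, H i c₁ * H i j := by
        rw [Finset.sum_comm]
        exact Finset.sum_congr rfl fun i _ => Finset.mul_sum _ _ _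
      rw [this, Finset.sum_congr rfl fun j _ => hcol c₁ j]
      simp
    rw [← key]
    exact Finset.dvd_sum fun i _ => Dvd.dvd.mul_left (hrows i) _
  -- the number of rows agreeing on columns c₁ c₂ is even
  have hagree : 2 ∣ (Finset.univ.filter (fun i => H i c₁ = H i c₂)).card := by
    have h0 := hcol c₁ c₂
    rw [if_neg hc] at h0
    have h1 : ∀ i : Fin N, H i c₁ * H i c₂
        = 2 * (if H i c₁ = H i c₂ then (1:ℤ) else 0) - 1 := by
      intro i
      rcases hentries i c₁ with h | h <;> rcases hentries i c₂ with h' | h' <;>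
        rw [h, h'] <;> norm_num
    rw [Finset.sum_congr rfl fun i _ => h1 i] at h0
    rw [Finset.sum_sub_distrib, ← Finset.mul_sum, Finset.sum_boole] at h0
    simp only [Finset.sum_const, Finset.card_univ, Fintype.card_fin, nsmul_eq_mul,
      mul_one] at h0
    have : 2 * ((Finset.univ.filter (fun i => H i c₁ = H i c₂)).card : ℤ) = (N:ℤ) := by
      omega
    omega
  -- row sum change
  have hdiff : ∀ i, (∑ j, H' i j) = (∑ j, H i j) - 2 * (H i c₁ + H i c₂) := by
    intro i
    have : ∀ j, H' i j = H i j + (if j ∈ ({c₁, c₂} : Finset (Fin N)) then -2 * H i j else 0) := by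
      intro j
      rw [hH' i j]
      by_cases h : j = c₁ ∨ j = c₂
      · rw [if_pos h, if_pos (by simpa using h)]; ring
      · rw [if_neg h, if_neg (by simpa using h)]; ring
    rw [Finset.sum_congr rfl fun j _ => this j, Finset.sum_add_distrib,
      Finset.sum_ite_mem, Finset.univ_inter, Finset.sum_pair hc]
    ring
  constructor
  · intro i
    rw [hdiff i]
    obtain ⟨t, ht⟩ := hrows i
    rcases hentries i c₁ with h | h <;> rcases hentries i c₂ with h' | h' <;>
      rw [h, h', ht] <;> ring_nf <;> omega
  · -- parity argument via ZMod 2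
    have hkey : ∀ i : Fin N,
        (if (∑ j, H' i j) % 8 = 4 then (1 : ZMod 2) else 0)
          = (if (∑ j, H i j) % 8 = 4 then (1 : ZMod 2) else 0)
            + (if H i c₁ = H i c₂ then (1 : ZMod 2) else 0) := by
      intro i
      obtain ⟨t, ht⟩ := hrows i
      have hd := hdiff i
      rcases hentries i c₁ with h | h <;> rcases hentries i c₂ with h' | h' <;>
        rw [h, h'] at hd
      · rw [if_pos (h.trans h'.symm)]
        have hiff : (∑ j, H' i j) % 8 = 4 ↔ ¬((∑ j, H i j) % 8 = 4) := by
          rw [hd, ht]; omega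
        by_cases hp : (∑ j, H i j) % 8 = 4
        · rw [if_neg (by rw [hiff]; simp [hp]), if_pos hp]; decide
        · rw [if_pos (hiff.mpr hp), if_neg hp]; decide
      · have hne : ¬(H i c₁ = H i c₂) := by rw [h, h']; norm_num
        have heq : (∑ j, H' i j) = (∑ j, H i j) := by rw [hd]; ring
        rw [heq, if_neg hne, add_zero]
      · have hne : ¬(H i c₁ = H i c₂) := by rw [h, h']; norm_num
        have heq : (∑ j, H' i j) = (∑ j, H i j) := by rw [hd]; ring
        rw [heq, if_neg hne, add_zero]
      · rw [if_pos (h.trans h'.symm)]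
        have hiff : (∑ j, H' i j) % 8 = 4 ↔ ¬((∑ j, H i j) % 8 = 4) := by
          rw [hd, ht]; omega
        by_cases hp : (∑ j, H i j) % 8 = 4
        · rw [if_neg (by rw [hiff]; simp [hp]), if_pos hp]; decide
        · rw [if_pos (hiff.mpr hp), if_neg hp]; decide
    have hsum := Finset.sum_congr rfl fun i (_ : i ∈ Finset.univ) => hkey i
    rw [Finset.sum_add_distrib, Finset.sum_boole, Finset.sum_boole, Finset.sum_boole] at hsum
    have hz : ((Finset.univ.filter (fun i => H i c₁ = H i c₂)).card : ZMod 2) = 0 := by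
      obtain ⟨m, hm⟩ := hagree
      rw [hm, Nat.cast_mul, (by decide : ((2:ℕ):ZMod 2) = 0), zero_mul]
    rw [hz, add_zero] at hsum
    have := (ZMod.natCast_eq_natCast_iff _ _ _).mp hsum.symm
    exact this
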